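/- Let σ > 0. The total variation similarity of the Gaussian mechanism with variance σ² on [0,1], whose output distribution on input x ∈ [0,1] has density μ_x(y) = (1/√(2πσ²))·e^{−(y−x)²/(2σ²)} on ℝ, equals 2·P[N(0,σ²) ≤ −1/2]; that is, ∫_ℝ inf_{x ∈ [0,1]} (1/√(2πσ²))·e^{−(y−x)²/(2σ²)} dy = 2·P[N(0,σ²) ≤ −1/2], where N(0,σ²) denotes a centered Gaussian random variable with variance σ². -/

import Mathlib

open MeasureTheory ProbabilityTheory
open scoped NNReal

/-- The total variation similarity of the Gaussian mechanism with
variance `σ²` on `[0,1]`, with densities `μ_x(y) = (1/√(2πσ²))·e^{−(y−x)²/(2σ²)}`, is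
`∫_ℝ inf_{x ∈ [0,1]} μ_x(y) dy = 2·P[N(0,σ²) ≤ −1/2]`. -/
theorem stmt10 (σ : ℝ) (hσ : 0 < σ) :
    ∫ y : ℝ, ⨅ x : Set.Icc (0:ℝ) 1,
        (1 / Real.sqrt (2 * Real.pi * σ ^ 2)) * Real.exp (-((y - (x : ℝ)) ^ 2 / (2 * σ ^ 2)))
      = 2 * (gaussianReal 0 ⟨σ ^ 2, sq_nonneg σ⟩ (Set.Iic (-(1 / 2)))).toReal := by
  set v : ℝ≥0 := ⟨σ ^ 2, sq_nonneg σ⟩ with hv_def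
  have hv : v ≠ 0 := by
    simp only [hv_def, ← NNReal.coe_ne_zero, NNReal.coe_mk]
    exact fun h => (pow_pos hσ 2).ne' (congrArg NNReal.toReal h)
  have hvcoe : (v : ℝ) = σ ^ 2 := rfl
  haveI : Nonempty (Set.Icc (0:ℝ) 1) := ⟨⟨0, by norm_num⟩⟩
  set p : ℝ → ℝ → ℝ := fun m y => gaussianPDFReal m v y with hp_def
  have hpnonneg : ∀ m y : ℝ, 0 ≤ p m y := fun m y => gaussianPDFReal_nonneg m v y
  have hpeq : ∀ m y : ℝ,
      (1 / Real.sqrt (2 * Real.pi * σ ^ 2)) * Real.exp (-((y - m) ^ 2 / (2 * σ ^ 2))) = p m y := by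
    intro m y
    simp [hp_def, gaussianPDFReal, hvcoe, one_div, neg_div]
  -- monotonicity of the density in the squared distance
  have hmono : ∀ m m' y : ℝ, (y - m) ^ 2 ≤ (y - m') ^ 2 → p m' y ≤ p m y := by
    intro m m' y h
    simp only [hp_def, gaussianPDFReal, hvcoe]
    refine mul_le_mul_of_nonneg_left (Real.exp_le_exp.2 ?_) (by positivity)
    rw [neg_div, neg_div, neg_le_neg_iff]
    gcongr
  -- pointwise computation of the infimum
  have hinf : ∀ y : ℝ, (⨅ x : Set.Icc (0:ℝ) 1,
      (1 / Real.sqrt (2 * Real.pi * σ ^ 2)) * Real.exp (-((y - (x : ℝ)) ^ 2 / (2 * σ ^ 2))))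
      = min (p 0 y) (p 1 y) := by
    intro y
    have hbdd : BddBelow (Set.range fun x : Set.Icc (0:ℝ) 1 =>
        (1 / Real.sqrt (2 * Real.pi * σ ^ 2)) * Real.exp (-((y - (x : ℝ)) ^ 2 / (2 * σ ^ 2)))) := by
      refine ⟨0, ?_⟩
      rintro z ⟨x, rfl⟩
      positivity
    refine le_antisymm (le_min ?_ ?_) (le_ciInf ?_)
    · calc _ ≤ _ := ciInf_le hbdd ⟨0, by norm_num⟩
        _ = p 0 y := hpeq 0 y
    · calc _ ≤ _ := ciInf_le hbdd ⟨1, by norm_num⟩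
        _ = p 1 y := hpeq 1 y
    · rintro ⟨x, hx0, hx1⟩
      rw [hpeq]
      rcases le_or_gt y (1/2) with hy | hy
      · exact le_trans (min_le_right _ _) (hmono x 1 y (by nlinarith))
      · exact le_trans (min_le_left _ _) (hmono x 0 y (by nlinarith))
  simp only [hinf]
  -- integrability of the minimum
  have hint : Integrable (fun y => min (p 0 y) (p 1 y)) := by
    refine Integrable.mono (integrable_gaussianPDFReal 0 v)
      (((measurable_gaussianPDFReal 0 v).min (measurable_gaussianPDFReal 1 v)).aestronglyMeasurable)
      (ae_of_all _ fun y => ?_)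
    rw [Real.norm_eq_abs, Real.norm_eq_abs, abs_of_nonneg (le_min (hpnonneg 0 y) (hpnonneg 1 y)),
      abs_of_nonneg (hpnonneg 0 y)]
    exact min_le_left _ _
  -- split the integral at 1/2
  have hsplit : ∫ y, min (p 0 y) (p 1 y)
      = (∫ y in Set.Iic (1/2 : ℝ), p 1 y) + ∫ y in Set.Ioi (1/2 : ℝ), p 0 y := by
    rw [← intervalIntegral.integral_Iic_add_Ioi (b := (1/2 : ℝ)) hint.integrableOn hint.integrableOn]
    congr 1
    · refine setIntegral_congr_fun measurableSet_Iic fun y hy => ?_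
      exact min_eq_right (hmono 0 1 y (by simp only [Set.mem_Iic] at hy; nlinarith))
    · refine setIntegral_congr_fun measurableSet_Ioi fun y hy => ?_
      exact min_eq_left (hmono 1 0 y (by simp only [Set.mem_Ioi] at hy; nlinarith))
  rw [hsplit]
  -- express the pieces as gaussian measures
  have habs : ∀ a : ℝ, gaussianReal 0 v {a} = 0 := fun a =>
    gaussianReal_absolutelyContinuous 0 hv (measure_singleton a)
  have h1 : ∫ y in Set.Iic (1/2 : ℝ), p 1 y
      = (gaussianReal 0 v (Set.Iic (-(1/2)))).toReal := by
    have hmap := gaussianReal_map_add_const (μ := 0) (v := v) 1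
    rw [zero_add] at hmap
    have : gaussianReal 1 v (Set.Iic (1/2 : ℝ)) = gaussianReal 0 v (Set.Iic (-(1/2) : ℝ)) := by
      rw [← hmap, Measure.map_apply (measurable_add_const 1) measurableSet_Iic]
      congr 1
      ext y
      simp only [Set.mem_preimage, Set.mem_Iic]
      constructor <;> intro <;> linarith
    rw [← this, gaussianReal_apply_eq_integral 1 hv,
      ENNReal.toReal_ofReal (setIntegral_nonneg measurableSet_Iic fun y _ => hpnonneg 1 y)]
  have h2 : ∫ y in Set.Ioi (1/2 : ℝ), p 0 y
      = (gaussianReal 0 v (Set.Iic (-(1/2)))).toReal := by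
    have hmap := gaussianReal_map_const_mul (μ := 0) (v := v) (-1)
    have hone : (NNReal.mk ((-1:ℝ)^2) (sq_nonneg _)) = 1 := by
      ext; norm_num
    rw [mul_zero, hone, one_mul] at hmap
    have hmeas : gaussianReal 0 v (Set.Ioi (1/2 : ℝ)) = gaussianReal 0 v (Set.Iic (-(1/2) : ℝ)) := by
      conv_lhs => rw [← hmap]
      rw [Measure.map_apply (measurable_const_mul (-1)) measurableSet_Ioi]
      have hpre : (fun y : ℝ => -1 * y) ⁻¹' Set.Ioi (1/2 : ℝ) = Set.Iio (-(1/2) : ℝ) := by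
        ext y
        simp only [Set.mem_preimage, Set.mem_Ioi, Set.mem_Iio]
        constructor <;> intro <;> linarith
      rw [hpre]
      exact measure_congr (Iio_ae_eq_Iic' (habs _))
    rw [← hmeas, gaussianReal_apply_eq_integral 0 hv,
      ENNReal.toReal_ofReal (setIntegral_nonneg measurableSet_Ioi fun y _ => hpnonneg 0 y)]
  rw [h1, h2]
  ring
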